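/- Let r and n be positive integers and let ε, ε' ∈ {0,1,…,r−1}^n be such that ε' is a permutation of the entries of ε. Then the following identity holds in ℤ[q,t,u]: ∑_{(γ,π) ∈ G_ε} q^{maj(γ,π)} t^{des(γ,π)} u^{col(ε)} = ∑_{(γ,π) ∈ G_{ε'}} q^{maj(γ,π)} t^{des(γ,π)} u^{col(ε')}. -/
import Mathlib


open Finset

/-- 1-based value of `π` at position `i ∈ {1,…,n}`, with the convention `π(0) = 0`. -/
def wval {n : ℕ} (π : Equiv.Perm (Fin n)) (i : ℕ) : ℕ :=
  if h : 1 ≤ i ∧ i ≤ n then (π ⟨i - 1, by omega⟩ : ℕ) + 1 else 0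

/-- Color at position `i` (1-based), with the convention `ε_0 = 0`. -/
def wcolor {n : ℕ} (ε : Fin n → ℕ) (i : ℕ) : ℕ :=
  if h : 1 ≤ i ∧ i ≤ n then ε ⟨i - 1, by omega⟩ else 0

/-- The Biagioli–Zeng order on colored letters: `(j,c) > (k,d)`. -/
def bzGT (a b : ℕ × ℕ) : Prop :=
  (a.2 = 0 ∧ b.2 = 0 ∧ b.1 < a.1) ∨ (0 < a.2 ∧ 0 < b.2 ∧ a.1 < b.1) ∨ (a.2 = 0 ∧ 0 < b.2)

instance (a b : ℕ × ℕ) : Decidable (bzGT a b) := by unfold bzGT; exact inferInstance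

/-- The descent set `Des(ε,π) ⊆ {0,…,n-1}` of a colored permutation. -/
def DesBZ {n : ℕ} (ε : Fin n → ℕ) (π : Equiv.Perm (Fin n)) : Finset ℕ :=
  (Finset.range n).filter fun i =>
    bzGT (wval π i, wcolor ε i) (wval π (i + 1), wcolor ε (i + 1))

def desBZ {n : ℕ} (ε : Fin n → ℕ) (π : Equiv.Perm (Fin n)) : ℕ := (DesBZ ε π).card

def majBZ {n : ℕ} (ε : Fin n → ℕ) (π : Equiv.Perm (Fin n)) : ℕ := ∑ i ∈ DesBZ ε π, i

/-- The color weight `col(ε)`. -/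
def colwt {n : ℕ} (ε : Fin n → ℕ) : ℕ := ∑ i, ε i

/-- Ordinary descent set `{i ∈ {1,…,n-1} : σ(i) > σ(i+1)}` (1-based). -/
def ordDes {n : ℕ} (σ : Equiv.Perm (Fin n)) : Finset ℕ :=
  (Finset.range n).filter fun i => 1 ≤ i ∧ wval σ (i + 1) < wval σ i

noncomputable def qP : MvPolynomial (Fin 2) ℤ := MvPolynomial.X 0
noncomputable def uP : MvPolynomial (Fin 2) ℤ := MvPolynomial.X 1
noncomputable def qNat (m : ℕ) : MvPolynomial (Fin 2) ℤ := ∑ i ∈ Finset.range m, qP ^ i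
noncomputable def uNat (m : ℕ) : MvPolynomial (Fin 2) ℤ := ∑ i ∈ Finset.range m, uP ^ i

/-- The monomial `m'(j,k)`. -/
noncomputable def mPrime (j k : ℕ) : MvPolynomial (Fin 2) ℤ :=
  if j ≤ k then qP ^ j else qP ^ ((j - 1) % k) * uP ^ ((j - 1) / k)

/-- Lattice points of `cone(F_ε)` at height `k`. -/
def Lset {n : ℕ} (ε : Fin n → ℕ) (k : ℕ) : Finset (Fin n → ℕ) :=
  Fintype.piFinset fun i =>
    if 0 < ε i then Finset.Ioc (k * ε i) (k * (ε i + 1)) else Finset.Icc 0 k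


lemma wval_eq {n : ℕ} (π : Equiv.Perm (Fin n)) (i : ℕ) (h1 : 1 ≤ i) (h2 : i ≤ n) :
    wval π i = (π ⟨i - 1, by omega⟩ : ℕ) + 1 := dif_pos ⟨h1, h2⟩

lemma wcolor_eq {n : ℕ} (ε : Fin n → ℕ) (i : ℕ) (h1 : 1 ≤ i) (h2 : i ≤ n) :
    wcolor ε i = ε ⟨i - 1, by omega⟩ := dif_pos ⟨h1, h2⟩

lemma wval_zero {n : ℕ} (π : Equiv.Perm (Fin n)) : wval π 0 = 0 := dif_neg (by omega)

lemma wcolor_zero {n : ℕ} (ε : Fin n → ℕ) : wcolor ε 0 = 0 := dif_neg (by omega)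

lemma bzGT_zero (v cc : ℕ) : bzGT (0, 0) (v + 1, cc) ↔ 0 < cc := by
  unfold bzGT; dsimp only; omega

lemma bzGT_iff {n : ℕ} (c c' : Fin n → ℕ) (e : Equiv.Perm (Fin n))
    (hpos : ∀ x, 0 < c' x ↔ 0 < c (e x))
    (hm : ∀ x y : Fin n, (0 < c' x ↔ 0 < c' y) → ((x : ℕ) < y ↔ (e x : ℕ) < e y))
    (x y : Fin n) :
    bzGT ((x : ℕ) + 1, c' x) ((y : ℕ) + 1, c' y) ↔
      bzGT ((e x : ℕ) + 1, c (e x)) ((e y : ℕ) + 1, c (e y)) := by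
  have hx := hpos x
  have hy := hpos y
  by_cases hcx : 0 < c' x <;> by_cases hcy : 0 < c' y
  · have hlt := hm x y (iff_of_true hcx hcy)
    have hlt' := hm y x (iff_of_true hcy hcx)
    unfold bzGT; dsimp only; omega
  · unfold bzGT; dsimp only; omega
  · unfold bzGT; dsimp only; omega
  · have hlt := hm x y (iff_of_false hcx hcy)
    have hlt' := hm y x (iff_of_false hcy hcx)
    unfold bzGT; dsimp only; omega

lemma DesBZ_comp {n : ℕ} (c c' : Fin n → ℕ) (e : Equiv.Perm (Fin n))
    (hpos : ∀ x, 0 < c' x ↔ 0 < c (e x))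
    (hm : ∀ x y : Fin n, (0 < c' x ↔ 0 < c' y) → ((x : ℕ) < y ↔ (e x : ℕ) < e y))
    (π : Equiv.Perm (Fin n)) :
    DesBZ (fun i => c' (π i)) π = DesBZ (fun i => c ((e * π) i)) (e * π) := by
  unfold DesBZ
  apply Finset.filter_congr
  intro i hi
  rw [Finset.mem_range] at hi
  rcases Nat.eq_zero_or_pos i with h0 | h1
  · subst h0
    have hn : 1 ≤ n := hi
    rw [wval_zero, wval_zero, wcolor_zero, wcolor_zero,
        wval_eq π 1 le_rfl hn, wval_eq (e * π) 1 le_rfl hn,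
        wcolor_eq _ 1 le_rfl hn, wcolor_eq _ 1 le_rfl hn]
    dsimp only [Equiv.Perm.mul_apply]
    rw [bzGT_zero, bzGT_zero]
    exact hpos _
  · have h2 : i ≤ n := le_of_lt hi
    have h3 : i + 1 ≤ n := hi
    rw [wval_eq π i h1 h2, wval_eq π (i + 1) (by omega) h3,
        wcolor_eq _ i h1 h2, wcolor_eq _ (i + 1) (by omega) h3,
        wval_eq (e * π) i h1 h2, wval_eq (e * π) (i + 1) (by omega) h3,
        wcolor_eq _ i h1 h2, wcolor_eq _ (i + 1) (by omega) h3]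
    dsimp only [Equiv.Perm.mul_apply]
    exact bzGT_iff c c' e hpos hm _ _

theorem rearrangement_same_generating_polynomial (r n : ℕ) (hr : 0 < r) (hn : 0 < n)
    (ε ε' : Fin n → ℕ) (hε : ∀ i, ε i < r) (hε' : ∀ i, ε' i < r)
    (τ : Equiv.Perm (Fin n)) (hτ : ∀ i, ε' i = ε (τ i)) :
    ∑ π : Equiv.Perm (Fin n),
        (MvPolynomial.X 0 : MvPolynomial (Fin 3) ℤ) ^ majBZ (fun i => ε (π i)) π *
          MvPolynomial.X 1 ^ desBZ (fun i => ε (π i)) π *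
          MvPolynomial.X 2 ^ colwt ε =
      ∑ π : Equiv.Perm (Fin n),
        (MvPolynomial.X 0 : MvPolynomial (Fin 3) ℤ) ^ majBZ (fun i => ε' (π i)) π *
          MvPolynomial.X 1 ^ desBZ (fun i => ε' (π i)) π *
          MvPolynomial.X 2 ^ colwt ε' := by
  classical
  have hcol : colwt ε' = colwt ε := by
    unfold colwt
    rw [← Equiv.sum_comp τ ε]
    exact Finset.sum_congr rfl fun i _ => hτ i
  set S : Finset (Fin n) := Finset.univ.filter (fun i => 0 < ε i) with hS
  set S' : Finset (Fin n) := Finset.univ.filter (fun i => 0 < ε' i) with hS'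
  have hmemS : ∀ i, i ∈ S ↔ 0 < ε i := by intro i; simp [hS]
  have hmemS' : ∀ i, i ∈ S' ↔ 0 < ε' i := by intro i; simp [hS']
  have himg : S' = S.image τ.symm := by
    ext i
    simp only [Finset.mem_image, hmemS, hmemS', hτ]
    constructor
    · intro h; exact ⟨τ i, h, τ.symm_apply_apply i⟩
    · rintro ⟨a, ha, rfl⟩; rwa [τ.apply_symm_apply]
  have hcard : S'.card = S.card := by
    rw [himg, Finset.card_image_of_injective _ τ.symm.injective]
  have hccard : S'ᶜ.card = Sᶜ.card := by
    simp [Finset.card_compl, hcard]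
  let oS : Fin S'.card ≃o S := S.orderIsoOfFin hcard.symm
  let oS' : Fin S'.card ≃o S' := S'.orderIsoOfFin rfl
  let oC : Fin S'ᶜ.card ≃o (Sᶜ : Finset (Fin n)) := (Sᶜ).orderIsoOfFin hccard.symm
  let oC' : Fin S'ᶜ.card ≃o (S'ᶜ : Finset (Fin n)) := (S'ᶜ).orderIsoOfFin rfl
  let f : Fin n → Fin n := fun i =>
    if hi : i ∈ S' then (oS (oS'.symm ⟨i, hi⟩) : Fin n)
    else (oC (oC'.symm ⟨i, Finset.mem_compl.mpr hi⟩) : Fin n)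
  have hfS : ∀ i, i ∈ S' → f i ∈ S := by
    intro i hi; simp only [f, dif_pos hi]; exact Finset.coe_mem _
  have hfC : ∀ i, i ∉ S' → f i ∉ S := by
    intro i hi; simp only [f, dif_neg hi]
    have : (oC (oC'.symm ⟨i, Finset.mem_compl.mpr hi⟩) : Fin n) ∈ Sᶜ := Finset.coe_mem _
    exact Finset.mem_compl.mp this
  have hposf : ∀ x, 0 < ε' x ↔ 0 < ε (f x) := by
    intro x
    by_cases hx : x ∈ S'
    · exact iff_of_true ((hmemS' x).mp hx) ((hmemS _).mp (hfS x hx))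
    · exact iff_of_false (fun h => hx ((hmemS' x).mpr h))
        (fun h => hfC x hx ((hmemS _).mpr h))
  have hmono : ∀ x y : Fin n, (0 < ε' x ↔ 0 < ε' y) → ((x : ℕ) < y ↔ (f x : ℕ) < f y) := by
    intro x y h
    rw [← Fin.lt_def, ← Fin.lt_def]
    by_cases hx : x ∈ S'
    · have hy : y ∈ S' := (hmemS' y).mpr (h.mp ((hmemS' x).mp hx))
      simp only [f, dif_pos hx, dif_pos hy]
      rw [Subtype.coe_lt_coe, oS.lt_iff_lt, oS'.symm.lt_iff_lt, Subtype.mk_lt_mk]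
    · have hy : y ∉ S' := fun hy => hx ((hmemS' x).mpr (h.mpr ((hmemS' y).mp hy)))
      simp only [f, dif_neg hx, dif_neg hy]
      rw [Subtype.coe_lt_coe, oC.lt_iff_lt, oC'.symm.lt_iff_lt, Subtype.mk_lt_mk]
  have hinj : Function.Injective f := by
    intro a b hab
    by_cases ha : a ∈ S' <;> by_cases hb : b ∈ S'
    · simp only [f, dif_pos ha, dif_pos hb] at hab
      have h2 : (⟨a, ha⟩ : {x // x ∈ S'}) = ⟨b, hb⟩ :=
        oS'.symm.injective (oS.injective (Subtype.ext hab))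
      exact congrArg Subtype.val h2
    · exact absurd (hab ▸ hfS a ha) (hfC b hb)
    · exact absurd (hab.symm ▸ hfS b hb) (hfC a ha)
    · simp only [f, dif_neg ha, dif_neg hb] at hab
      have h2 : (⟨a, Finset.mem_compl.mpr ha⟩ : {x // x ∈ S'ᶜ}) = ⟨b, Finset.mem_compl.mpr hb⟩ :=
        oC'.symm.injective (oC.injective (Subtype.ext hab))
      exact congrArg Subtype.val h2
  let e : Equiv.Perm (Fin n) := Equiv.ofBijective f (Finite.injective_iff_bijective.mp hinj)
  have he : ∀ x, e x = f x := fun x => rfl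
  rw [hcol]
  symm
  rw [← Equiv.sum_comp (Equiv.mulLeft e)
    (fun σ : Equiv.Perm (Fin n) =>
      (MvPolynomial.X 0 : MvPolynomial (Fin 3) ℤ) ^ majBZ (fun i => ε (σ i)) σ *
        MvPolynomial.X 1 ^ desBZ (fun i => ε (σ i)) σ * MvPolynomial.X 2 ^ colwt ε)]
  apply Finset.sum_congr rfl
  intro π _
  have hdes : DesBZ (fun i => ε' (π i)) π = DesBZ (fun i => ε ((e * π) i)) (e * π) := by
    apply DesBZ_comp ε ε' e (fun x => (he x) ▸ hposf x)
      (fun x y h => (he x) ▸ (he y) ▸ hmono x y h)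
  simp only [Equiv.coe_mulLeft, majBZ, desBZ, hdes]
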